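/- Geometric expansion of a random matrix inverse (Lemma 1): let (X_n) and (Y_n) be sequences of random q×q real matrices such that X_n⁻¹ and (X_n + n^{−1/2}Y_n)⁻¹ exist almost surely, and X_n⁻¹ = O_p(1) and Y_n = O_p(1). Then for every nonnegative integer m, (X_n + n^{−1/2}Y_n)⁻¹ = ∑_{j=0}^{m} (−n^{−1/2} X_n⁻¹Y_n)^j X_n⁻¹ + O_p(n^{−(m+1)/2}). -/

import Mathlib

open Matrix Filter MeasureTheory

attribute [local instance] Matrix.normedAddCommGroup
attribute [local instance] Matrix.normedSpace

noncomputable section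

/-- `Z_n = O_p(a_n)`: the sequence `{Z_n / a_n}` is bounded in probability — for every
`ε > 0` there is `M > 0` with `P(‖Z_n‖ / a_n > M) < ε` for all sufficiently large `n`. -/
def IsBigOp {Ωs : Type*} [MeasurableSpace Ωs] (P : Measure Ωs)
    {E : Type*} [Norm E] (Z : ℕ → Ωs → E) (a : ℕ → ℝ) : Prop :=
  ∀ ε : ℝ, 0 < ε → ∃ M : ℝ, 0 < M ∧
    ∀ᶠ n in atTop, P {ω | M < ‖Z n ω‖ / a n} < ENNReal.ofReal ε

/-- Multiplicativity (up to dimension constant) of the entrywise sup norm. -/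
private lemma mnorm_mul {q : ℕ} (A B : Matrix (Fin q) (Fin q) ℝ) :
    ‖A * B‖ ≤ (q : ℝ) * ‖A‖ * ‖B‖ := by
  have h0 : (0:ℝ) ≤ (q : ℝ) * ‖A‖ * ‖B‖ := by positivity
  rw [Matrix.norm_le_iff h0]
  intro i j
  rw [Matrix.mul_apply]
  calc ‖∑ k, A i k * B k j‖ ≤ ∑ k, ‖A i k * B k j‖ := norm_sum_le _ _
    _ ≤ ∑ _k : Fin q, ‖A‖ * ‖B‖ := Finset.sum_le_sum fun k _ => by
        rw [norm_mul]
        exact mul_le_mul (Matrix.norm_entry_le_entrywise_sup_norm A)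
          (Matrix.norm_entry_le_entrywise_sup_norm B) (norm_nonneg _) (norm_nonneg _)
    _ = (q : ℝ) * ‖A‖ * ‖B‖ := by
        rw [Finset.sum_const, Finset.card_univ, Fintype.card_fin, nsmul_eq_mul]; ring

private lemma mnorm_pow {q : ℕ} (B : Matrix (Fin q) (Fin q) ℝ) (k : ℕ) :
    ‖B ^ (k + 1)‖ ≤ (q : ℝ) ^ k * ‖B‖ ^ (k + 1) := by
  induction k with
  | zero => simp
  | succ k ih =>
      calc ‖B ^ (k + 2)‖ = ‖B * B ^ (k + 1)‖ := by rw [pow_succ']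
        _ ≤ (q : ℝ) * ‖B‖ * ‖B ^ (k + 1)‖ := mnorm_mul _ _
        _ ≤ (q : ℝ) * ‖B‖ * ((q : ℝ) ^ k * ‖B‖ ^ (k + 1)) := by
            apply mul_le_mul_of_nonneg_left ih
            positivity
        _ = (q : ℝ) ^ (k + 1) * ‖B‖ ^ (k + 2) := by ring

/-- The exact geometric-series remainder identity for the matrix inverse. -/
private lemma geom_identity {q : ℕ} (X Y : Matrix (Fin q) (Fin q) ℝ) (t : ℝ) (m : ℕ)
    (hdX : IsUnit X.det) (hdA : IsUnit (X + t • Y).det) :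
    (X + t • Y)⁻¹ - ∑ j ∈ Finset.range (m + 1), ((-t) • (X⁻¹ * Y)) ^ j * X⁻¹
      = ((-t) • (X⁻¹ * Y)) ^ (m + 1) * (X + t • Y)⁻¹ := by
  set B := t • (X⁻¹ * Y) with hB
  have hBneg : (-t) • (X⁻¹ * Y) = -B := by rw [hB, neg_smul]
  have hfact : X + t • Y = X * (1 + B) := by
    rw [mul_add, mul_one, hB, Matrix.mul_smul, ← mul_assoc,
      Matrix.mul_nonsing_inv X hdX, one_mul]
  have hdet1B : IsUnit (1 + B).det := by
    have h := hdA
    rw [hfact, Matrix.det_mul] at h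
    exact isUnit_of_mul_isUnit_right h
  have hinv : (X + t • Y)⁻¹ = (1 + B)⁻¹ * X⁻¹ := by rw [hfact, Matrix.mul_inv_rev]
  have hone : (1 + B) * (1 + B)⁻¹ = 1 := Matrix.mul_nonsing_inv _ hdet1B
  have hgeom : (∑ j ∈ Finset.range (m + 1), (-B) ^ j) * (1 + B) = 1 - (-B) ^ (m + 1) := by
    have h := geom_sum_mul (-B) (m + 1)
    have h2 : (∑ j ∈ Finset.range (m + 1), (-B) ^ j) * (1 + B)
        = -((∑ j ∈ Finset.range (m + 1), (-B) ^ j) * (-B - 1)) := by noncomm_ring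
    rw [h2, h]; noncomm_ring
  have h2 : (∑ j ∈ Finset.range (m + 1), (-B) ^ j)
      = (1 + B)⁻¹ - (-B) ^ (m + 1) * (1 + B)⁻¹ := by
    have h3 : (∑ j ∈ Finset.range (m + 1), (-B) ^ j) * ((1 + B) * (1 + B)⁻¹)
        = (1 - (-B) ^ (m + 1)) * (1 + B)⁻¹ := by rw [← mul_assoc, hgeom]
    rw [hone, mul_one, sub_mul, one_mul] at h3
    exact h3
  have hrem : (1 + B)⁻¹ - ∑ j ∈ Finset.range (m + 1), (-B) ^ j
      = (-B) ^ (m + 1) * (1 + B)⁻¹ := by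
    rw [h2]; exact sub_sub_cancel _ _
  rw [hinv, hBneg, ← Finset.sum_mul, ← sub_mul, hrem, mul_assoc]

private lemma tpow_eq (n m : ℕ) :
    ((n : ℝ) ^ (-(1 : ℝ) / 2)) ^ (m + 1) = (n : ℝ) ^ (-((m : ℝ) + 1) / 2) := by
  rw [← Real.rpow_natCast ((n : ℝ) ^ (-(1 : ℝ) / 2)) (m + 1),
    ← Real.rpow_mul (Nat.cast_nonneg n)]
  congr 1
  push_cast
  ring

/-- The deterministic core bound: on the good event, the remainder is `O(t^(m+1))`. -/
private lemma main_bound {q : ℕ} (X Y : Matrix (Fin q) (Fin q) ℝ) (t M : ℝ) (m : ℕ)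
    (ht : 0 ≤ t) (hM : 0 < M)
    (hx : ‖X⁻¹‖ ≤ M) (hy : ‖Y‖ ≤ M)
    (hsmall : t * ((q : ℝ) * (q : ℝ) * M * M) ≤ 1 / 2)
    (hdX : IsUnit X.det) (hdA : IsUnit (X + t • Y).det) :
    ‖(X + t • Y)⁻¹ - ∑ j ∈ Finset.range (m + 1), ((-t) • (X⁻¹ * Y)) ^ j * X⁻¹‖
      ≤ t ^ (m + 1) * ((q : ℝ) ^ (m + 1) * ((q : ℝ) * M * M) ^ (m + 1) * (2 * M)) := by
  set c : ℝ := (q : ℝ) with hc'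
  have hc : (0:ℝ) ≤ c := Nat.cast_nonneg q
  have hMM : (0:ℝ) ≤ c * M * M := mul_nonneg (mul_nonneg hc hM.le) hM.le
  set A := X + t • Y with hA
  -- bound on ‖A⁻¹‖
  have e1 : A * A⁻¹ = 1 := Matrix.mul_nonsing_inv _ hdA
  have e1' : X * A⁻¹ + t • (Y * A⁻¹) = 1 := by
    rw [← Matrix.smul_mul, ← add_mul, ← hA, e1]
  have h3 : X * A⁻¹ = 1 - t • (Y * A⁻¹) := eq_sub_of_add_eq e1'
  have e2 : A⁻¹ = X⁻¹ - t • (X⁻¹ * (Y * A⁻¹)) := by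
    calc A⁻¹ = (X⁻¹ * X) * A⁻¹ := by rw [Matrix.nonsing_inv_mul _ hdX, one_mul]
      _ = X⁻¹ * (X * A⁻¹) := by rw [mul_assoc]
      _ = X⁻¹ * (1 - t • (Y * A⁻¹)) := by rw [h3]
      _ = X⁻¹ - t • (X⁻¹ * (Y * A⁻¹)) := by rw [mul_sub, mul_one, Matrix.mul_smul]
  have hn1 : ‖Y * A⁻¹‖ ≤ c * M * ‖A⁻¹‖ := by
    refine le_trans (mnorm_mul _ _) ?_
    exact mul_le_mul_of_nonneg_right (mul_le_mul_of_nonneg_left hy hc) (norm_nonneg _)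
  have hn2 : ‖X⁻¹ * (Y * A⁻¹)‖ ≤ c * M * (c * M * ‖A⁻¹‖) := by
    refine le_trans (mnorm_mul _ _) ?_
    exact mul_le_mul (mul_le_mul_of_nonneg_left hx hc) hn1 (norm_nonneg _)
      (mul_nonneg hc hM.le)
  have hn3 : ‖A⁻¹‖ ≤ M + t * (c * M * (c * M * ‖A⁻¹‖)) := by
    calc ‖A⁻¹‖ = ‖X⁻¹ - t • (X⁻¹ * (Y * A⁻¹))‖ := by rw [← e2]
      _ ≤ ‖X⁻¹‖ + ‖t • (X⁻¹ * (Y * A⁻¹))‖ := norm_sub_le _ _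
      _ ≤ M + t * (c * M * (c * M * ‖A⁻¹‖)) := by
          refine add_le_add hx ?_
          rw [norm_smul, Real.norm_eq_abs, abs_of_nonneg ht]
          exact mul_le_mul_of_nonneg_left hn2 ht
  have hAinv : ‖A⁻¹‖ ≤ 2 * M := by
    have hh := mul_le_mul_of_nonneg_right hsmall (norm_nonneg A⁻¹)
    nlinarith [norm_nonneg A⁻¹]
  -- norm of B
  have h1 : ‖X⁻¹ * Y‖ ≤ c * M * M := by
    refine le_trans (mnorm_mul _ _) ?_
    exact mul_le_mul (mul_le_mul_of_nonneg_left hx hc) hy (norm_nonneg _)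
      (mul_nonneg hc hM.le)
  have hBnorm : ‖(-t) • (X⁻¹ * Y)‖ ≤ t * (c * M * M) := by
    rw [norm_smul, Real.norm_eq_abs, abs_neg, abs_of_nonneg ht]
    exact mul_le_mul_of_nonneg_left h1 ht
  rw [geom_identity X Y t m hdX hdA]
  calc ‖((-t) • (X⁻¹ * Y)) ^ (m + 1) * A⁻¹‖
      ≤ c * ‖((-t) • (X⁻¹ * Y)) ^ (m + 1)‖ * ‖A⁻¹‖ := mnorm_mul _ _
    _ ≤ c * (c ^ m * ‖(-t) • (X⁻¹ * Y)‖ ^ (m + 1)) * (2 * M) := by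
        refine mul_le_mul (mul_le_mul_of_nonneg_left (mnorm_pow _ m) hc) hAinv
          (norm_nonneg _) ?_
        exact mul_nonneg hc (mul_nonneg (pow_nonneg hc _) (pow_nonneg (norm_nonneg _) _))
    _ ≤ c * (c ^ m * (t * (c * M * M)) ^ (m + 1)) * (2 * M) := by
        refine mul_le_mul_of_nonneg_right (mul_le_mul_of_nonneg_left
          (mul_le_mul_of_nonneg_left
            (pow_le_pow_left₀ (norm_nonneg _) hBnorm _) (pow_nonneg hc _)) hc) ?_
        linarith
    _ = t ^ (m + 1) * (c ^ (m + 1) * (c * M * M) ^ (m + 1) * (2 * M)) := by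
        rw [mul_pow]; ring

/-- **Geometric expansion of a random matrix inverse (Lemma 1).** If `X_n⁻¹` and
`(X_n + n^{−1/2} Y_n)⁻¹` exist almost surely, `X_n⁻¹ = O_p(1)` and `Y_n = O_p(1)`, then for
every nonnegative integer `m`,
`(X_n + n^{−1/2}Y_n)⁻¹ = ∑_{j=0}^{m} (−n^{−1/2} X_n⁻¹Y_n)^j X_n⁻¹ + O_p(n^{−(m+1)/2})`. -/
theorem geometric_expansion_random_matrix_inverse
    {Ωs : Type*} [MeasurableSpace Ωs] (P : Measure Ωs) [IsProbabilityMeasure P]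
    {q : ℕ} (X Y : ℕ → Ωs → Matrix (Fin q) (Fin q) ℝ)
    (hXmeas : ∀ n (i j : Fin q), Measurable fun ω => X n ω i j)
    (hYmeas : ∀ n (i j : Fin q), Measurable fun ω => Y n ω i j)
    (hXinv : ∀ n, ∀ᵐ ω ∂P, IsUnit (X n ω).det)
    (hXYinv : ∀ n, ∀ᵐ ω ∂P,
      IsUnit (X n ω + ((n : ℝ) ^ (-(1 : ℝ) / 2)) • Y n ω).det)
    (hXinvOp : IsBigOp P (fun n ω => (X n ω)⁻¹) (fun _ => 1))
    (hYOp : IsBigOp P Y (fun _ => 1)) :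
    ∀ m : ℕ,
      IsBigOp P
        (fun n ω =>
          (X n ω + ((n : ℝ) ^ (-(1 : ℝ) / 2)) • Y n ω)⁻¹
            - ∑ j ∈ Finset.range (m + 1),
                (-((n : ℝ) ^ (-(1 : ℝ) / 2)) • ((X n ω)⁻¹ * Y n ω)) ^ j * (X n ω)⁻¹)
        (fun n => (n : ℝ) ^ (-((m : ℝ) + 1) / 2)) := by
  intro m ε hε
  obtain ⟨M₁, hM₁pos, hM₁⟩ := hXinvOp (ε / 2) (by linarith)
  obtain ⟨M₂, hM₂pos, hM₂⟩ := hYOp (ε / 2) (by linarith)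
  set M : ℝ := max M₁ M₂ with hMdef
  have hMpos : 0 < M := lt_of_lt_of_le hM₁pos (le_max_left _ _)
  set c : ℝ := (q : ℝ) with hc'
  have hc : (0:ℝ) ≤ c := Nat.cast_nonneg q
  set C : ℝ := c ^ (m + 1) * (c * M * M) ^ (m + 1) * (2 * M) with hCdef
  have hC : 0 ≤ C := by
    refine mul_nonneg (mul_nonneg (pow_nonneg hc _) (pow_nonneg ?_ _)) (by linarith)
    exact mul_nonneg (mul_nonneg hc hMpos.le) hMpos.le
  refine ⟨C + 1, by linarith, ?_⟩
  -- t n tends to 0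
  have htend : Tendsto (fun n : ℕ => ((n : ℝ)) ^ (-(1 : ℝ) / 2)) atTop (nhds 0) := by
    have h := (tendsto_rpow_neg_atTop (by norm_num : (0:ℝ) < 1 / 2)).comp
      (tendsto_natCast_atTop_atTop (R := ℝ))
    have he : (fun n : ℕ => ((n : ℝ)) ^ (-(1 : ℝ) / 2))
        = (fun x : ℝ => x ^ (-(1 / 2 : ℝ))) ∘ (Nat.cast : ℕ → ℝ) := by
      funext n; simp [Function.comp, neg_div]
    rw [he]
    exact h
  set K : ℝ := c * c * M * M with hKdef
  have htendK : Tendsto (fun n : ℕ => ((n : ℝ)) ^ (-(1 : ℝ) / 2) * K) atTop (nhds 0) := by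
    simpa using htend.mul_const K
  have hsmallev : ∀ᶠ n : ℕ in atTop, ((n : ℝ)) ^ (-(1 : ℝ) / 2) * K ≤ 1 / 2 :=
    (htendK.eventually_lt_const (by norm_num : (0:ℝ) < 1 / 2)).mono fun n hn => hn.le
  filter_upwards [hM₁, hM₂, hsmallev, eventually_ge_atTop 1] with n h1 h2 hsmall hn1
  set t : ℝ := ((n : ℝ)) ^ (-(1 : ℝ) / 2) with htdef
  have ht : 0 ≤ t := Real.rpow_nonneg (Nat.cast_nonneg n) _
  set Bx : Set Ωs := {ω | M₁ < ‖(X n ω)⁻¹‖ / 1} with hBx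
  set By : Set Ωs := {ω | M₂ < ‖Y n ω‖ / 1} with hBy
  set Nx : Set Ωs := {ω | ¬ IsUnit (X n ω).det} with hNx
  set Na : Set Ωs := {ω | ¬ IsUnit (X n ω + t • Y n ω).det} with hNa
  have hsub : {ω | C + 1 <
      ‖(X n ω + t • Y n ω)⁻¹
        - ∑ j ∈ Finset.range (m + 1), ((-t) • ((X n ω)⁻¹ * Y n ω)) ^ j * (X n ω)⁻¹‖
        / (n : ℝ) ^ (-((m : ℝ) + 1) / 2)} ⊆ Bx ∪ (By ∪ (Nx ∪ Na)) := by
    intro ω hω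
    by_contra hcon
    simp only [Set.mem_union, hBx, hBy, hNx, hNa, Set.mem_setOf_eq, not_or, not_lt,
      not_not] at hcon
    obtain ⟨hxb, hyb, hdX, hdA⟩ := hcon
    rw [div_one] at hxb hyb
    have hx' : ‖(X n ω)⁻¹‖ ≤ M := hxb.trans (le_max_left _ _)
    have hy' : ‖Y n ω‖ ≤ M := hyb.trans (le_max_right _ _)
    have hb := main_bound (X n ω) (Y n ω) t M m ht hMpos hx' hy' hsmall hdX hdA
    have hapos : 0 < (n : ℝ) ^ (-((m : ℝ) + 1) / 2) := by
      refine Real.rpow_pos_of_pos ?_ _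
      exact_mod_cast Nat.lt_of_lt_of_le Nat.zero_lt_one hn1
    have hω' : C + 1 <
        ‖(X n ω + t • Y n ω)⁻¹
          - ∑ j ∈ Finset.range (m + 1), ((-t) • ((X n ω)⁻¹ * Y n ω)) ^ j * (X n ω)⁻¹‖
          / (n : ℝ) ^ (-((m : ℝ) + 1) / 2) := hω
    have hdiv : ‖(X n ω + t • Y n ω)⁻¹
        - ∑ j ∈ Finset.range (m + 1), ((-t) • ((X n ω)⁻¹ * Y n ω)) ^ j * (X n ω)⁻¹‖
        / (n : ℝ) ^ (-((m : ℝ) + 1) / 2) ≤ C := by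
      rw [div_le_iff₀ hapos]
      calc ‖(X n ω + t • Y n ω)⁻¹
          - ∑ j ∈ Finset.range (m + 1), ((-t) • ((X n ω)⁻¹ * Y n ω)) ^ j * (X n ω)⁻¹‖
          ≤ t ^ (m + 1) * C := hb
        _ = C * (n : ℝ) ^ (-((m : ℝ) + 1) / 2) := by
            rw [htdef, tpow_eq n m, mul_comm]
    linarith
  have hnull : P (Nx ∪ Na) = 0 :=
    measure_union_null (ae_iff.mp (hXinv n)) (ae_iff.mp (hXYinv n))
  calc P {ω | C + 1 <
      ‖(X n ω + t • Y n ω)⁻¹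
        - ∑ j ∈ Finset.range (m + 1), ((-t) • ((X n ω)⁻¹ * Y n ω)) ^ j * (X n ω)⁻¹‖
        / (n : ℝ) ^ (-((m : ℝ) + 1) / 2)}
      ≤ P (Bx ∪ (By ∪ (Nx ∪ Na))) := measure_mono hsub
    _ ≤ P Bx + P (By ∪ (Nx ∪ Na)) := measure_union_le _ _
    _ ≤ P Bx + (P By + P (Nx ∪ Na)) := add_le_add le_rfl (measure_union_le _ _)
    _ = P Bx + P By := by rw [hnull, add_zero]
    _ < ENNReal.ofReal (ε / 2) + ENNReal.ofReal (ε / 2) := ENNReal.add_lt_add h1 h2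
    _ = ENNReal.ofReal ε := by
        rw [← ENNReal.ofReal_add (by linarith) (by linarith)]
        norm_num
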